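/- Let Ω ⊆ ℝ^d be open and bounded, p ∈ (1,∞), and let 𝟙 denote the constant function equal to 1. For μ_n, μ ∈ P_p(Ω), the sequence μ_n converges weakly-* to μ (i.e., ∫ φ dμ_n → ∫ φ dμ for every bounded continuous φ : Ω → ℝ) if and only if d_TLp((μ_n, 𝟙), (μ, 𝟙)) → 0. -/

import Mathlib

open MeasureTheory Filter Topology

/-- `∑ i, |v i|^p`, the p-th power of the ℓ^p norm on ℝ^k. -/
noncomputable def lpPow (p : ℝ) {k : ℕ} (v : Fin k → ℝ) : ℝ := ∑ i, |v i| ^ p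

/-- `π` is a coupling (transport plan) between `μ` and `ν`. -/
def IsCoupling {α β : Type*} [MeasurableSpace α] [MeasurableSpace β]
    (π : Measure (α × β)) (μ : Measure α) (ν : Measure β) : Prop :=
  π.map Prod.fst = μ ∧ π.map Prod.snd = ν

/-- The Kantorovich optimal transport cost for a cost function `c`. -/
noncomputable def OTCost {α β : Type*} [MeasurableSpace α] [MeasurableSpace β]
    (c : α → β → ℝ) (μ : Measure α) (ν : Measure β) : ℝ :=
  ⨅ π : {π : Measure (α × β) // IsCoupling π μ ν},
    ∫ z, c z.1 z.2 ∂(π : Measure (α × β))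

/-- The TL^p distance between `(μ, f)` and `(ν, g)`. -/
noncomputable def dTLp (p : ℝ) {d m : ℕ} (μ ν : Measure (Fin d → ℝ))
    (f g : (Fin d → ℝ) → Fin m → ℝ) : ℝ :=
  (OTCost (fun x y => lpPow p (x - y) + lpPow p (f x - g y)) μ ν) ^ (1 / p)

open scoped ENNReal

section Basic
variable {d : ℕ} {p : ℝ}

lemma lpPow_nonneg (v : Fin d → ℝ) : 0 ≤ lpPow p v :=
  Finset.sum_nonneg fun i _ => Real.rpow_nonneg (abs_nonneg _) _

lemma lpPow_zero (hp : p ≠ 0) : lpPow p (0 : Fin d → ℝ) = 0 := by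
  simp [lpPow, Real.zero_rpow hp]

lemma lpPow_continuous (hp : 0 < p) :
    Continuous fun z : (Fin d → ℝ) × (Fin d → ℝ) => lpPow p (z.1 - z.2) := by
  unfold lpPow
  refine continuous_finset_sum _ fun i _ => ?_
  have h1 : Continuous fun z : (Fin d → ℝ) × (Fin d → ℝ) => |z.1 i - z.2 i| :=
    (((continuous_apply i).comp continuous_fst).sub
      ((continuous_apply i).comp continuous_snd)).abs
  exact h1.rpow_const fun z => Or.inr hp.le

lemma lpPow_le (hp : 0 < p) {t : ℝ} (ht : 0 ≤ t) {x y : Fin d → ℝ}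
    (h : ∀ i, |x i - y i| ≤ t) : lpPow p (x - y) ≤ d * t ^ p := by
  have : ∀ i ∈ Finset.univ, |(x - y) i| ^ p ≤ t ^ p := fun i _ =>
    Real.rpow_le_rpow (abs_nonneg _) (by simpa using h i) hp.le
  calc lpPow p (x - y) ≤ ∑ _i : Fin d, t ^ p := Finset.sum_le_sum this
    _ = d * t ^ p := by simp [mul_comm]

lemma le_lpPow (hp : 0 < p) {t : ℝ} (ht : 0 < t) {x y : Fin d → ℝ}
    (h : t ≤ dist x y) : t ^ p ≤ lpPow p (x - y) := by
  have : ¬ (dist x y < t) := not_lt.mpr h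
  rw [dist_pi_lt_iff ht] at this
  push_neg at this
  obtain ⟨i, hi⟩ := this
  have h1 : t ^ p ≤ |(x - y) i| ^ p := by
    refine Real.rpow_le_rpow ht.le ?_ hp.le
    simpa [Real.dist_eq] using hi
  refine h1.trans ?_
  exact Finset.single_le_sum (fun j _ => Real.rpow_nonneg (abs_nonneg _) _) (Finset.mem_univ i)

end Basic

section Couplings
variable {α β : Type*} [MeasurableSpace α] [MeasurableSpace β]
  {μ : Measure α} {ν : Measure β} {π : Measure (α × β)}

lemma IsCoupling.isProbabilityMeasure (h : IsCoupling π μ ν) [IsProbabilityMeasure μ] :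
    IsProbabilityMeasure π := by
  constructor
  have := h.1
  have h2 : π.map Prod.fst Set.univ = π Set.univ := by
    rw [Measure.map_apply measurable_fst MeasurableSet.univ]; simp
  rw [this] at h2
  rw [← h2]; simp

lemma isCoupling_prod (μ : Measure α) (ν : Measure β) [IsProbabilityMeasure μ]
    [IsProbabilityMeasure ν] : IsCoupling (μ.prod ν) μ ν := by
  constructor
  · rw [Measure.map_fst_prod]; simp
  · rw [Measure.map_snd_prod]; simp

instance couplings_nonempty [IsProbabilityMeasure μ] [IsProbabilityMeasure ν] :
    Nonempty {π : Measure (α × β) // IsCoupling π μ ν} :=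
  ⟨⟨μ.prod ν, isCoupling_prod μ ν⟩⟩

lemma OTCost_bddBelow (c : α → β → ℝ) (hc : ∀ x y, 0 ≤ c x y) (μ : Measure α) (ν : Measure β) :
    BddBelow (Set.range fun π : {π : Measure (α × β) // IsCoupling π μ ν} =>
      ∫ z, c z.1 z.2 ∂(π : Measure (α × β))) := by
  refine ⟨0, ?_⟩
  rintro x ⟨π, rfl⟩
  exact integral_nonneg fun z => hc _ _

lemma OTCost_nonneg (c : α → β → ℝ) (hc : ∀ x y, 0 ≤ c x y) (μ : Measure α) (ν : Measure β)
    [IsProbabilityMeasure μ] [IsProbabilityMeasure ν] : 0 ≤ OTCost c μ ν :=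
  Real.iInf_nonneg fun π => integral_nonneg fun z => hc _ _

lemma OTCost_le_coupling (c : α → β → ℝ) (hc : ∀ x y, 0 ≤ c x y) {μ : Measure α} {ν : Measure β}
    (hπ : IsCoupling π μ ν) : OTCost c μ ν ≤ ∫ z, c z.1 z.2 ∂π :=
  ciInf_le (OTCost_bddBelow c hc μ ν) ⟨π, hπ⟩

lemma exists_coupling_lt (c : α → β → ℝ) {μ : Measure α} {ν : Measure β}
    [IsProbabilityMeasure μ] [IsProbabilityMeasure ν] {a : ℝ} (h : OTCost c μ ν < a) :
    ∃ π : Measure (α × β), IsCoupling π μ ν ∧ ∫ z, c z.1 z.2 ∂π < a := by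
  obtain ⟨⟨π, hπ⟩, h2⟩ := exists_lt_of_ciInf_lt h
  exact ⟨π, hπ, h2⟩

end Couplings

section AE
variable {α : Type*} [MeasurableSpace α]
  {μ ν : Measure α} {π : Measure (α × α)}

lemma coupling_ae_mem (h : π.map Prod.fst = ν) (h2 : π.map Prod.snd = μ)
    {Ω : Set α} (hΩm : MeasurableSet Ω) (hν : ν Ωᶜ = 0) (hμ : μ Ωᶜ = 0) :
    ∀ᵐ z ∂π, z.1 ∈ Ω ∧ z.2 ∈ Ω := by
  have e1 : π (Prod.fst ⁻¹' Ωᶜ) = 0 := by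
    rw [← Measure.map_apply measurable_fst hΩm.compl, h]; exact hν
  have e2 : π (Prod.snd ⁻¹' Ωᶜ) = 0 := by
    rw [← Measure.map_apply measurable_snd hΩm.compl, h2]; exact hμ
  rw [ae_iff]
  refine measure_mono_null (fun z hz => ?_) (measure_union_null e1 e2)
  simp only [Set.mem_setOf_eq, not_and_or] at hz
  rcases hz with hz | hz
  · exact Or.inl hz
  · exact Or.inr hz

lemma integral_coupling_fst (h : π.map Prod.fst = ν) (φ : α → ℝ)
    (hφ : AEStronglyMeasurable φ ν) : ∫ z, φ z.1 ∂π = ∫ x, φ x ∂ν := by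
  rw [← h] at hφ ⊢
  exact (integral_map measurable_fst.aemeasurable hφ).symm

lemma integral_coupling_snd (h : π.map Prod.snd = μ) (φ : α → ℝ)
    (hφ : AEStronglyMeasurable φ μ) : ∫ z, φ z.2 ∂π = ∫ x, φ x ∂μ := by
  rw [← h] at hφ ⊢
  exact (integral_map measurable_snd.aemeasurable hφ).symm

end AE

section DirA
variable {d : ℕ} {p : ℝ}
local notation "X" => Fin d → ℝ

lemma abs_integral_sub_le_of_coupling (hp : 0 < p) {Ω : Set X} (hΩm : MeasurableSet Ω)
    {ν μ : Measure X} [IsProbabilityMeasure ν] [IsProbabilityMeasure μ]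
    (hν : ν Ωᶜ = 0) (hμ : μ Ωᶜ = 0) (φ : BoundedContinuousFunction X ℝ)
    {δ ε R : ℝ}
    (hδ : 0 < δ) (hε : 0 ≤ ε)
    (hR : ∀ x ∈ Ω, ∀ y ∈ Ω, lpPow p (x - y) ≤ R)
    (hUC : ∀ x ∈ Ω, ∀ y ∈ Ω, dist x y < δ → |φ x - φ y| ≤ ε)
    {π : Measure (X × X)} (hπ : IsCoupling π ν μ) :
    |∫ x, φ x ∂ν - ∫ x, φ x ∂μ| ≤ ε + (2 * ‖φ‖ / δ ^ p) * ∫ z, lpPow p (z.1 - z.2) ∂π := by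
  haveI : IsProbabilityMeasure π := hπ.isProbabilityMeasure
  set c : X × X → ℝ := fun z => lpPow p (z.1 - z.2) with hc
  have hmem : ∀ᵐ z ∂π, z.1 ∈ Ω ∧ z.2 ∈ Ω := coupling_ae_mem hπ.1 hπ.2 hΩm hν hμ
  -- integrability of the cost
  have hcint : Integrable c π := by
    refine Integrable.mono' (integrable_const R) ((lpPow_continuous hp).aestronglyMeasurable) ?_
    filter_upwards [hmem] with z hz
    rw [Real.norm_eq_abs, abs_of_nonneg (lpPow_nonneg _)]
    exact hR _ hz.1 _ hz.2
  have hδp : (0:ℝ) < δ ^ p := Real.rpow_pos_of_pos hδ p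
  have hcoef : (0:ℝ) ≤ 2 * ‖φ‖ / δ ^ p := by positivity
  -- the integral difference
  have hint1 : Integrable (fun z : X × X => φ z.1) π :=
    (φ.compContinuous ⟨Prod.fst, continuous_fst⟩).integrable π
  have hint2 : Integrable (fun z : X × X => φ z.2) π :=
    (φ.compContinuous ⟨Prod.snd, continuous_snd⟩).integrable π
  have key : ∫ x, φ x ∂ν - ∫ x, φ x ∂μ = ∫ z, (φ z.1 - φ z.2) ∂π := by
    rw [integral_sub hint1 hint2,
      integral_coupling_fst hπ.1 _ φ.continuous.aestronglyMeasurable,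
      integral_coupling_snd hπ.2 _ φ.continuous.aestronglyMeasurable]
  rw [key]
  have habs : |∫ z, (φ z.1 - φ z.2) ∂π| ≤ ∫ z, |φ z.1 - φ z.2| ∂π := by
    simpa [Real.norm_eq_abs] using
      norm_integral_le_integral_norm (μ := π) (fun z : X × X => φ z.1 - φ z.2)
  refine habs.trans ?_
  have hbound : ∀ᵐ z ∂π, |φ z.1 - φ z.2| ≤ ε + (2 * ‖φ‖ / δ ^ p) * c z := by
    filter_upwards [hmem] with z hz
    by_cases hdist : dist z.1 z.2 < δ
    · have h1 := hUC _ hz.1 _ hz.2 hdist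
      have h2 : (0:ℝ) ≤ (2 * ‖φ‖ / δ ^ p) * c z := mul_nonneg hcoef (lpPow_nonneg _)
      linarith
    · push_neg at hdist
      have h1 : δ ^ p ≤ c z := le_lpPow hp hδ hdist
      have h2 : |φ z.1 - φ z.2| ≤ 2 * ‖φ‖ := by
        have := abs_sub_abs_le_abs_sub (φ z.1) (φ z.2)
        calc |φ z.1 - φ z.2| ≤ |φ z.1| + |φ z.2| := abs_sub _ _
          _ ≤ ‖φ‖ + ‖φ‖ := add_le_add (φ.norm_coe_le_norm z.1) (φ.norm_coe_le_norm z.2)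
          _ = 2 * ‖φ‖ := by ring
      have h3 : 2 * ‖φ‖ ≤ (2 * ‖φ‖ / δ ^ p) * c z := by
        calc 2 * ‖φ‖ = (2 * ‖φ‖ / δ ^ p) * δ ^ p := by field_simp
          _ ≤ (2 * ‖φ‖ / δ ^ p) * c z := mul_le_mul_of_nonneg_left h1 hcoef
      linarith
  have hgint : Integrable (fun z => ε + (2 * ‖φ‖ / δ ^ p) * c z) π :=
    (integrable_const ε).add (hcint.const_mul _)
  have h5 : ∫ z, |φ z.1 - φ z.2| ∂π ≤ ∫ z, (ε + (2 * ‖φ‖ / δ ^ p) * c z) ∂π := by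
    refine integral_mono_ae ?_ hgint hbound
    have := (hint1.sub hint2).abs
    simpa using this
  refine h5.trans ?_
  rw [integral_add (integrable_const ε) (hcint.const_mul _), integral_const,
    integral_const_mul]
  simp
end DirA


-- ENNReal helpers
lemma einv {x y : ℝ≥0∞} (hy : y ≠ ⊤) (h0 : y = 0 → x = 0) : x * y⁻¹ * y = x := by
  rcases eq_or_ne y 0 with rfl | hy0
  · simp [h0 rfl]
  · rw [mul_assoc, ENNReal.inv_mul_cancel hy0 hy, mul_one]

lemma measure_map_finset_sum {α β ι : Type*} [MeasurableSpace α] [MeasurableSpace β]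
    {f : α → β} (hf : Measurable f) (t : Finset ι) (m : ι → Measure α) :
    (∑ i ∈ t, m i).map f = ∑ i ∈ t, (m i).map f := by
  classical
  induction t using Finset.cons_induction with
  | empty => simp
  | cons i t hi ih => rw [Finset.sum_cons, Measure.map_add _ _ hf, ih, Finset.sum_cons]

section Partition
variable {α : Type*} [MeasurableSpace α] {ι : Type*} [Fintype ι]

theorem OTCost_le_of_partition
    (c : α → α → ℝ) (hc0 : ∀ x y, 0 ≤ c x y)
    (hcm : Measurable fun z : α × α => c z.1 z.2)
    {ν μ : Measure α} [IsProbabilityMeasure ν] [IsProbabilityMeasure μ]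
    {Ω : Set α} (hΩm : MeasurableSet Ω) (hν : ν Ωᶜ = 0) (hμ : μ Ωᶜ = 0)
    {R : ℝ} (hR0 : 0 ≤ R) (hcR : ∀ x ∈ Ω, ∀ y ∈ Ω, c x y ≤ R)
    {A : ι → Set α} (hAm : ∀ i, MeasurableSet (A i)) (hdisj : Pairwise (Function.onFun Disjoint A))
    (hcov : Ω ⊆ ⋃ i, A i) {δ : ℝ} (hδ0 : 0 ≤ δ)
    (hsmall : ∀ i, ∀ x ∈ A i, ∀ y ∈ A i, c x y ≤ δ) :
    OTCost c ν μ ≤ δ + R * ∑ i, |(ν (A i)).toReal - (μ (A i)).toReal| := by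
  classical
  set a : ι → ℝ≥0∞ := fun i => ν (A i) with ha_def
  set b : ι → ℝ≥0∞ := fun i => μ (A i) with hb_def
  set mm : ι → ℝ≥0∞ := fun i => min (a i) (b i) with hmm_def
  have ha_top : ∀ i, a i ≠ ⊤ := fun i => measure_ne_top ν (A i)
  have hb_top : ∀ i, b i ≠ ⊤ := fun i => measure_ne_top μ (A i)
  have hm_le_a : ∀ i, mm i ≤ a i := fun i => min_le_left _ _
  have hm_le_b : ∀ i, mm i ≤ b i := fun i => min_le_right _ _
  have hm_top : ∀ i, mm i ≠ ⊤ := fun i => ne_top_of_le_ne_top (ha_top i) (hm_le_a i)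
  -- total masses
  have hUcompl_ν : ν (⋃ i, A i)ᶜ = 0 :=
    measure_mono_null (Set.compl_subset_compl.mpr hcov) hν
  have hUcompl_μ : μ (⋃ i, A i)ᶜ = 0 :=
    measure_mono_null (Set.compl_subset_compl.mpr hcov) hμ
  have hUmeas : MeasurableSet (⋃ i, A i) := MeasurableSet.iUnion fun i => hAm i
  have hsum_a : ∑ i, a i = 1 := by
    have h1 : ν (⋃ i, A i) = ∑' i, ν (A i) := measure_iUnion hdisj hAm
    have h2 : ν (⋃ i, A i) + ν (⋃ i, A i)ᶜ = 1 := by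
      rw [measure_add_measure_compl hUmeas]; simp
    rw [hUcompl_ν, add_zero] at h2
    rw [← tsum_fintype (L := SummationFilter.unconditional _)] ; rw [← h1] ; exact h2
  have hsum_b : ∑ i, b i = 1 := by
    have h1 : μ (⋃ i, A i) = ∑' i, μ (A i) := measure_iUnion hdisj hAm
    have h2 : μ (⋃ i, A i) + μ (⋃ i, A i)ᶜ = 1 := by
      rw [measure_add_measure_compl hUmeas]; simp
    rw [hUcompl_μ, add_zero] at h2
    rw [← tsum_fintype (L := SummationFilter.unconditional _)] ; rw [← h1] ; exact h2
  have hsum_mm_le : ∑ i, mm i ≤ 1 := by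
    rw [← hsum_a]; exact Finset.sum_le_sum fun i _ => hm_le_a i
  have hsum_mm_top : ∑ i, mm i ≠ ⊤ := ne_top_of_le_ne_top ENNReal.one_ne_top hsum_mm_le
  -- restricted measures sum to the full measures
  have hres_ν : ∑ i, ν.restrict (A i) = ν := by
    rw [← Measure.sum_fintype, ← Measure.restrict_iUnion hdisj hAm]
    refine Measure.restrict_eq_self_of_ae_mem ?_
    rw [ae_iff]
    refine measure_mono_null (fun x hx => ?_) hUcompl_ν
    simpa using hx
  have hres_μ : ∑ i, μ.restrict (A i) = μ := by
    rw [← Measure.sum_fintype, ← Measure.restrict_iUnion hdisj hAm]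
    refine Measure.restrict_eq_self_of_ae_mem ?_
    rw [ae_iff]
    refine measure_mono_null (fun x hx => ?_) hUcompl_μ
    simpa using hx
  -- the pieces of the coupling
  set w : ι → ℝ≥0∞ := fun i => mm i * (a i * b i)⁻¹ with hw_def
  set πin : Measure (α × α) :=
    ∑ i, w i • ((ν.restrict (A i)).prod (μ.restrict (A i))) with hπin_def
  set ν' : Measure α := ∑ i, ((a i - mm i) * (a i)⁻¹) • ν.restrict (A i) with hν'_def
  set μ' : Measure α := ∑ i, ((b i - mm i) * (b i)⁻¹) • μ.restrict (A i) with hμ'_def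
  set s : ℝ≥0∞ := 1 - ∑ i, mm i with hs_def
  have hs_top : s ≠ ⊤ := ne_top_of_le_ne_top ENNReal.one_ne_top tsub_le_self
  set π : Measure (α × α) := πin + s⁻¹ • (ν'.prod μ') with hπ_def
  -- masses of ν' and μ'
  have hν'_univ : ν' Set.univ = s := by
    rw [hν'_def]
    rw [Measure.coe_finset_sum]
    simp only [Finset.sum_apply, Measure.smul_apply, Measure.restrict_apply_univ, smul_eq_mul]
    have h1 : ∀ i ∈ Finset.univ, (a i - mm i) * (a i)⁻¹ * (a i) = a i - mm i := by
      intro i _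
      exact einv (ha_top i) (fun h => by
        have : mm i = 0 := le_antisymm (h ▸ hm_le_a i) zero_le
        rw [this, h, tsub_zero])
    rw [Finset.sum_congr rfl h1]
    have h2 : (∑ i, (a i - mm i)) + ∑ i, mm i = 1 := by
      rw [← Finset.sum_add_distrib]
      rw [Finset.sum_congr rfl fun i _ => tsub_add_cancel_of_le (hm_le_a i)]
      exact hsum_a
    rw [hs_def]
    exact ENNReal.eq_sub_of_add_eq hsum_mm_top h2
  have hμ'_univ : μ' Set.univ = s := by
    rw [hμ'_def]
    rw [Measure.coe_finset_sum]
    simp only [Finset.sum_apply, Measure.smul_apply, Measure.restrict_apply_univ, smul_eq_mul]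
    have h1 : ∀ i ∈ Finset.univ, (b i - mm i) * (b i)⁻¹ * (b i) = b i - mm i := by
      intro i _
      exact einv (hb_top i) (fun h => by
        have : mm i = 0 := le_antisymm (h ▸ hm_le_b i) zero_le
        rw [this, h, tsub_zero])
    rw [Finset.sum_congr rfl h1]
    have h2 : (∑ i, (b i - mm i)) + ∑ i, mm i = 1 := by
      rw [← Finset.sum_add_distrib]
      rw [Finset.sum_congr rfl fun i _ => tsub_add_cancel_of_le (hm_le_b i)]
      exact hsum_b
    rw [hs_def]
    exact ENNReal.eq_sub_of_add_eq hsum_mm_top h2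
  haveI hν'_fin : IsFiniteMeasure ν' :=
    ⟨by rw [hν'_univ]; exact lt_of_le_of_lt (le_of_eq rfl) (hs_top.lt_top)⟩
  haveI hμ'_fin : IsFiniteMeasure μ' :=
    ⟨by rw [hμ'_univ]; exact hs_top.lt_top⟩
  -- decomposition identities
  have hdecomp_ν : (∑ i, (mm i * (a i)⁻¹) • ν.restrict (A i)) + ν' = ν := by
    rw [hν'_def, ← Finset.sum_add_distrib]
    conv_rhs => rw [← hres_ν]
    refine Finset.sum_congr rfl fun i _ => ?_
    rcases eq_or_ne (a i) 0 with hz | hz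
    · have : ν.restrict (A i) = 0 := Measure.restrict_eq_zero.mpr hz
      simp [this]
    · rw [← add_smul, ← add_mul, add_comm (mm i), tsub_add_cancel_of_le (hm_le_a i),
        ENNReal.mul_inv_cancel hz (ha_top i), one_smul]
  have hdecomp_μ : (∑ i, (mm i * (b i)⁻¹) • μ.restrict (A i)) + μ' = μ := by
    rw [hμ'_def, ← Finset.sum_add_distrib]
    conv_rhs => rw [← hres_μ]
    refine Finset.sum_congr rfl fun i _ => ?_
    rcases eq_or_ne (b i) 0 with hz | hz
    · have : μ.restrict (A i) = 0 := Measure.restrict_eq_zero.mpr hz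
      simp [this]
    · rw [← add_smul, ← add_mul, add_comm (mm i), tsub_add_cancel_of_le (hm_le_b i),
        ENNReal.mul_inv_cancel hz (hb_top i), one_smul]
  -- marginals
  have hcoupling : IsCoupling π ν μ := by
    constructor
    · -- fst marginal
      rw [hπ_def, Measure.map_add _ _ measurable_fst, Measure.map_smul,
        hπin_def, measure_map_finset_sum measurable_fst]
      have h1 : ∀ i ∈ Finset.univ,
          (w i • ((ν.restrict (A i)).prod (μ.restrict (A i)))).map Prod.fst
            = (mm i * (a i)⁻¹) • ν.restrict (A i) := by
        intro i _
        rw [Measure.map_smul, Measure.map_fst_prod, Measure.restrict_apply_univ, smul_smul]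
        congr 1
        show mm i * (a i * b i)⁻¹ * (b i) = mm i * (a i)⁻¹
        rcases eq_or_ne (b i) 0 with hz | hz
        · have hmz : mm i = 0 := le_antisymm (hz ▸ hm_le_b i) zero_le
          simp [hmz]
        · rw [ENNReal.mul_inv (Or.inr (hb_top i)) (Or.inl (ha_top i)),
            show mm i * ((a i)⁻¹ * (b i)⁻¹) * (b i) = mm i * (a i)⁻¹ * ((b i)⁻¹ * (b i)) by ring,
            ENNReal.inv_mul_cancel hz (hb_top i), mul_one]
      rw [Finset.sum_congr rfl h1]
      rw [Measure.map_fst_prod, hμ'_univ]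
      rcases eq_or_ne s 0 with hs0 | hs0
      · have hν'0 : ν' = 0 := by
          apply Measure.measure_univ_eq_zero.mp; rw [hν'_univ, hs0]
        rw [hν'0] at hdecomp_ν ⊢
        simpa using hdecomp_ν
      · rw [smul_smul, ENNReal.inv_mul_cancel hs0 hs_top, one_smul]
        exact hdecomp_ν
    · -- snd marginal
      rw [hπ_def, Measure.map_add _ _ measurable_snd, Measure.map_smul,
        hπin_def, measure_map_finset_sum measurable_snd]
      have h1 : ∀ i ∈ Finset.univ,
          (w i • ((ν.restrict (A i)).prod (μ.restrict (A i)))).map Prod.snd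
            = (mm i * (b i)⁻¹) • μ.restrict (A i) := by
        intro i _
        rw [Measure.map_smul, Measure.map_snd_prod, Measure.restrict_apply_univ, smul_smul]
        congr 1
        show mm i * (a i * b i)⁻¹ * (a i) = mm i * (b i)⁻¹
        rcases eq_or_ne (a i) 0 with hz | hz
        · have hmz : mm i = 0 := le_antisymm (hz ▸ hm_le_a i) zero_le
          simp [hmz]
        · rw [ENNReal.mul_inv (Or.inr (hb_top i)) (Or.inl (ha_top i)),
            show mm i * ((a i)⁻¹ * (b i)⁻¹) * (a i) = mm i * (b i)⁻¹ * ((a i)⁻¹ * (a i)) by ring,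
            ENNReal.inv_mul_cancel hz (ha_top i), mul_one]
      rw [Finset.sum_congr rfl h1]
      rw [Measure.map_snd_prod, hν'_univ]
      rcases eq_or_ne s 0 with hs0 | hs0
      · have hμ'0 : μ' = 0 := by
          apply Measure.measure_univ_eq_zero.mp; rw [hμ'_univ, hs0]
        rw [hμ'0] at hdecomp_μ ⊢
        simpa using hdecomp_μ
      · rw [smul_smul, ENNReal.inv_mul_cancel hs0 hs_top, one_smul]
        exact hdecomp_μ
  -- cost bound
  set C : α × α → ℝ≥0∞ := fun z => ENNReal.ofReal (c z.1 z.2) with hC_def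
  have hCmeas : Measurable C := hcm.ennreal_ofReal
  have hcell : ∀ i, ∫⁻ z, C z ∂((ν.restrict (A i)).prod (μ.restrict (A i)))
      ≤ ENNReal.ofReal δ * (a i * b i) := by
    intro i
    rw [Measure.prod_restrict]
    have hb : ∀ᵐ z ∂((ν.prod μ).restrict ((A i) ×ˢ (A i))), C z ≤ ENNReal.ofReal δ := by
      filter_upwards [ae_restrict_mem ((hAm i).prod (hAm i))] with z hz
      exact ENNReal.ofReal_le_ofReal (hsmall i _ hz.1 _ hz.2)
    calc ∫⁻ z, C z ∂((ν.prod μ).restrict ((A i) ×ˢ (A i)))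
        ≤ ∫⁻ _z, ENNReal.ofReal δ ∂((ν.prod μ).restrict ((A i) ×ˢ (A i))) :=
          lintegral_mono_ae hb
      _ = ENNReal.ofReal δ * (a i * b i) := by
          rw [lintegral_const, Measure.restrict_apply_univ, Measure.prod_prod]
  have hresΩc_ν : ∀ i, ν.restrict (A i) Ωᶜ = 0 := fun i => by
    rw [Measure.restrict_apply hΩm.compl]
    exact measure_mono_null Set.inter_subset_left hν
  have hresΩc_μ : ∀ i, μ.restrict (A i) Ωᶜ = 0 := fun i => by
    rw [Measure.restrict_apply hΩm.compl]
    exact measure_mono_null Set.inter_subset_left hμ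
  have hν'Ωc : ν' Ωᶜ = 0 := by
    rw [hν'_def]
    rw [Measure.coe_finset_sum]
    simp only [Finset.sum_apply, Measure.smul_apply, smul_eq_mul]
    rw [Finset.sum_congr rfl fun i _ => by rw [hresΩc_ν i, mul_zero]]
    simp
  have hμ'Ωc : μ' Ωᶜ = 0 := by
    rw [hμ'_def]
    rw [Measure.coe_finset_sum]
    simp only [Finset.sum_apply, Measure.smul_apply, smul_eq_mul]
    rw [Finset.sum_congr rfl fun i _ => by rw [hresΩc_μ i, mul_zero]]
    simp
  have hprod_ae : ∀ᵐ z ∂(ν'.prod μ'), z.1 ∈ Ω ∧ z.2 ∈ Ω := by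
    rw [ae_iff]
    have hsub : {z : α × α | ¬(z.1 ∈ Ω ∧ z.2 ∈ Ω)} ⊆ (Ωᶜ ×ˢ Set.univ) ∪ (Set.univ ×ˢ Ωᶜ) := by
      intro z hz
      simp only [Set.mem_setOf_eq, not_and_or] at hz
      rcases hz with h | h
      · exact Or.inl (Set.mem_prod.mpr ⟨h, Set.mem_univ _⟩)
      · exact Or.inr (Set.mem_prod.mpr ⟨Set.mem_univ _, h⟩)
    refine measure_mono_null hsub (measure_union_null ?_ ?_)
    · rw [Measure.prod_prod, hν'Ωc, zero_mul]
    · rw [Measure.prod_prod, hμ'Ωc, mul_zero]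
  have houter : ∫⁻ z, C z ∂(ν'.prod μ') ≤ ENNReal.ofReal R * (s * s) := by
    have hb : ∀ᵐ z ∂(ν'.prod μ'), C z ≤ ENNReal.ofReal R := by
      filter_upwards [hprod_ae] with z hz
      exact ENNReal.ofReal_le_ofReal (hcR _ hz.1 _ hz.2)
    calc ∫⁻ z, C z ∂(ν'.prod μ') ≤ ∫⁻ _z, ENNReal.ofReal R ∂(ν'.prod μ') :=
        lintegral_mono_ae hb
      _ = ENNReal.ofReal R * (s * s) := by
        rw [lintegral_const, ← Set.univ_prod_univ, Measure.prod_prod, hν'_univ, hμ'_univ]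
  have htot : ∫⁻ z, C z ∂π ≤ ENNReal.ofReal δ + ENNReal.ofReal R * s := by
    rw [hπ_def, lintegral_add_measure, hπin_def, lintegral_finset_sum_measure]
    have h1 : ∑ i, ∫⁻ z, C z ∂(w i • ((ν.restrict (A i)).prod (μ.restrict (A i))))
        ≤ ENNReal.ofReal δ := by
      have e1 : ∀ i ∈ Finset.univ,
          ∫⁻ z, C z ∂(w i • ((ν.restrict (A i)).prod (μ.restrict (A i))))
          = w i * ∫⁻ z, C z ∂((ν.restrict (A i)).prod (μ.restrict (A i))) :=
        fun i _ => lintegral_smul_measure _ _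
      rw [Finset.sum_congr rfl e1]
      have e2 : ∀ i ∈ Finset.univ,
          w i * ∫⁻ z, C z ∂((ν.restrict (A i)).prod (μ.restrict (A i)))
          ≤ ENNReal.ofReal δ * mm i := by
        intro i _
        have hw_eq : w i * (a i * b i) = mm i := by
          refine einv (ENNReal.mul_ne_top (ha_top i) (hb_top i)) (fun h => ?_)
          rcases mul_eq_zero.mp h with h' | h'
          · exact le_antisymm (h' ▸ hm_le_a i) zero_le
          · exact le_antisymm (h' ▸ hm_le_b i) zero_le
        calc w i * ∫⁻ z, C z ∂((ν.restrict (A i)).prod (μ.restrict (A i)))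
            ≤ w i * (ENNReal.ofReal δ * (a i * b i)) := mul_le_mul_right (hcell i) _
          _ = ENNReal.ofReal δ * (w i * (a i * b i)) := by ring
          _ = ENNReal.ofReal δ * mm i := by rw [hw_eq]
      calc ∑ i, w i * ∫⁻ z, C z ∂((ν.restrict (A i)).prod (μ.restrict (A i)))
          ≤ ∑ i, ENNReal.ofReal δ * mm i := Finset.sum_le_sum e2
        _ = ENNReal.ofReal δ * ∑ i, mm i := by rw [Finset.mul_sum]
        _ ≤ ENNReal.ofReal δ * 1 := mul_le_mul_right hsum_mm_le _
        _ = ENNReal.ofReal δ := mul_one _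
    have hss : s⁻¹ * s ≤ 1 := by
      rcases eq_or_ne s 0 with h | h
      · simp [h]
      · rw [ENNReal.inv_mul_cancel h hs_top]
    have h2 : ∫⁻ z, C z ∂(s⁻¹ • (ν'.prod μ')) ≤ ENNReal.ofReal R * s := by
      rw [lintegral_smul_measure]
      calc s⁻¹ * ∫⁻ z, C z ∂(ν'.prod μ')
          ≤ s⁻¹ * (ENNReal.ofReal R * (s * s)) := mul_le_mul_right houter _
        _ = ENNReal.ofReal R * s * (s⁻¹ * s) := by ring
        _ ≤ ENNReal.ofReal R * s * 1 := mul_le_mul_right hss _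
        _ = ENNReal.ofReal R * s := mul_one _
    exact add_le_add h1 h2
  have hint_eq : ∫ z, c z.1 z.2 ∂π = (∫⁻ z, C z ∂π).toReal := by
    rw [integral_eq_lintegral_of_nonneg_ae
      (Filter.Eventually.of_forall fun z : α × α => hc0 z.1 z.2) hcm.aestronglyMeasurable]
  have hcost : ∫ z, c z.1 z.2 ∂π ≤ δ + R * s.toReal := by
    rw [hint_eq]
    have hT_top : ENNReal.ofReal R * s ≠ ⊤ := ENNReal.mul_ne_top ENNReal.ofReal_ne_top hs_top
    refine le_trans (ENNReal.toReal_mono (ENNReal.add_ne_top.mpr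
      ⟨ENNReal.ofReal_ne_top, hT_top⟩) htot) ?_
    rw [ENNReal.toReal_add ENNReal.ofReal_ne_top hT_top, ENNReal.toReal_mul,
      ENNReal.toReal_ofReal hδ0, ENNReal.toReal_ofReal hR0]
  have hs_toReal : s.toReal ≤ ∑ i, |(a i).toReal - (b i).toReal| := by
    have h1 : s.toReal = 1 - (∑ i, mm i).toReal := by
      rw [hs_def, ENNReal.toReal_sub_of_le hsum_mm_le ENNReal.one_ne_top, ENNReal.toReal_one]
    have h2 : (∑ i, mm i).toReal = ∑ i, min ((a i).toReal) ((b i).toReal) := by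
      rw [ENNReal.toReal_sum fun i _ => hm_top i]
      exact Finset.sum_congr rfl fun i _ => ENNReal.toReal_min (ha_top i) (hb_top i)
    have h3 : (1:ℝ) = ∑ i, (a i).toReal := by
      rw [← ENNReal.toReal_sum fun i _ => ha_top i, hsum_a, ENNReal.toReal_one]
    rw [h1, h2, h3, ← Finset.sum_sub_distrib]
    refine Finset.sum_le_sum fun i _ => ?_
    rcases le_total ((a i).toReal) ((b i).toReal) with h | h
    · rw [min_eq_left h, sub_self]
      exact abs_nonneg _
    · rw [min_eq_right h, abs_of_nonneg (sub_nonneg.mpr h)]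
  calc OTCost c ν μ ≤ ∫ z, c z.1 z.2 ∂π := OTCost_le_coupling c hc0 hcoupling
    _ ≤ δ + R * s.toReal := hcost
    _ ≤ δ + R * ∑ i, |(ν (A i)).toReal - (μ (A i)).toReal| :=
        add_le_add_right (mul_le_mul_of_nonneg_left hs_toReal hR0) δ
end Partition

section Grid
variable {d : ℕ}

lemma exists_good_offset (μ : Measure (Fin d → ℝ)) [IsFiniteMeasure μ] (j : Fin d)
    {h : ℝ} (hh : 0 < h) (M : ℝ) :
    ∃ o : ℝ, o ≤ -M ∧ ∀ k : ℤ, μ {x | x j = o + k * h} = 0 := by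
  classical
  set Bad : Set ℝ := {t : ℝ | μ {x | x j = t} ≠ 0} with hBad_def
  have hBadc : Bad.Countable := by
    have h1 : Bad ⊆ {t : ℝ | 0 < μ {x : Fin d → ℝ | x j = t}} := by
      intro t ht; exact zero_lt_iff.mpr ht
    refine Set.Countable.mono h1 ?_
    refine Measure.countable_meas_pos_of_disjoint_of_meas_iUnion_ne_top μ
      (fun t => ?_) (fun t t' htt' => ?_) (measure_ne_top μ _)
    · have he : {x : Fin d → ℝ | x j = t} = (fun x : Fin d → ℝ => x j) ⁻¹' {t} := rfl
      rw [he]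
      exact (measurable_pi_apply j) (measurableSet_singleton t)
    · refine Set.disjoint_left.mpr fun x hx hx' => htt' ?_
      rw [← hx, ← hx']
  set BadShift : Set ℝ := ⋃ k : ℤ, (fun o : ℝ => o + k * h) ⁻¹' Bad with hBS_def
  have hBSc : BadShift.Countable := by
    refine Set.countable_iUnion fun k => ?_
    have he : (fun o : ℝ => o + (k : ℝ) * h) ⁻¹' Bad = (fun t : ℝ => t - k * h) '' Bad := by
      ext o
      simp only [Set.mem_preimage, Set.mem_image]
      constructor
      · intro H; exact ⟨o + k * h, H, by ring⟩
      · rintro ⟨t, ht, rfl⟩; simpa [sub_add_cancel] using ht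
    rw [he]
    exact hBadc.image _
  have hex : ∃ o₀ : ℝ, o₀ ∉ BadShift := by
    by_contra hcon
    push_neg at hcon
    exact Cardinal.not_countable_real (Set.Countable.mono (fun o _ => hcon o) hBSc)
  obtain ⟨o₀, ho₀⟩ := hex
  have hgood : ∀ k : ℤ, μ {x | x j = o₀ + k * h} = 0 := by
    intro k
    by_contra hcon
    exact ho₀ (Set.mem_iUnion.mpr ⟨k, hcon⟩)
  refine ⟨o₀ + ⌊(-M - o₀)/h⌋ * h, ?_, ?_⟩
  · have h1 : (⌊(-M - o₀)/h⌋ : ℝ) ≤ (-M - o₀)/h := Int.floor_le _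
    have h2 : (⌊(-M - o₀)/h⌋ : ℝ) * h ≤ -M - o₀ := by
      calc (⌊(-M - o₀)/h⌋ : ℝ) * h ≤ ((-M - o₀)/h) * h :=
            mul_le_mul_of_nonneg_right h1 hh.le
        _ = -M - o₀ := div_mul_cancel₀ _ hh.ne'
    linarith
  · intro k
    have he : {x : Fin d → ℝ | x j = o₀ + ⌊(-M - o₀)/h⌋ * h + k * h}
        = {x : Fin d → ℝ | x j = o₀ + ((⌊(-M - o₀)/h⌋ + k : ℤ) : ℝ) * h} := by
      ext x; simp only [Set.mem_setOf_eq]; push_cast; ring_nf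
    rw [he]
    exact hgood _

lemma exists_partition (μ : Measure (Fin d → ℝ)) [IsProbabilityMeasure μ]
    {h M : ℝ} (hh : 0 < h) (hM : 0 ≤ M) :
    ∃ (N : ℕ) (A : (Fin d → Fin N) → Set (Fin d → ℝ)),
      (∀ k, MeasurableSet (A k)) ∧ Pairwise (Function.onFun Disjoint A) ∧
      ({x : Fin d → ℝ | ∀ j, |x j| ≤ M} ⊆ ⋃ k, A k) ∧
      (∀ k, ∀ x ∈ A k, ∀ y ∈ A k, ∀ j, |x j - y j| ≤ h) ∧
      (∀ k, μ (frontier (A k)) = 0) := by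
  classical
  choose o ho1 ho2 using fun j : Fin d => exists_good_offset μ j hh M
  set S : ℝ := ∑ j : Fin d, (M - o j)/h with hS_def
  have hterm_nonneg : ∀ j, 0 ≤ (M - o j)/h := fun j =>
    div_nonneg (by have := ho1 j; linarith) hh.le
  have hS0 : 0 ≤ S := Finset.sum_nonneg fun j _ => hterm_nonneg j
  obtain ⟨N, hN⟩ := exists_nat_ge (S + 1)
  have hN0 : N ≠ 0 := by
    rintro rfl
    simp only [Nat.cast_zero] at hN
    linarith
  have hNj : ∀ j, (M - o j)/h + 1 ≤ N := by
    intro j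
    have h1 : (M - o j)/h ≤ S := Finset.single_le_sum (fun i _ => hterm_nonneg i)
      (Finset.mem_univ j)
    linarith
  set A : (Fin d → Fin N) → Set (Fin d → ℝ) := fun k =>
    Set.univ.pi fun j => Set.Ico (o j + (k j : ℕ) * h) (o j + ((k j : ℕ) + 1) * h) with hA_def
  have hlu : ∀ (j : Fin d) (m : ℕ), o j + (m:ℝ) * h < o j + ((m:ℝ) + 1) * h := by
    intro j m; nlinarith
  refine ⟨N, A, ?_, ?_, ?_, ?_, ?_⟩
  · intro k
    exact MeasurableSet.univ_pi fun j => measurableSet_Ico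
  · intro k k' hkk'
    obtain ⟨j, hj⟩ := Function.ne_iff.mp hkk'
    refine Set.disjoint_left.mpr fun x hx hx' => ?_
    have h1 := (Set.mem_univ_pi.mp hx) j
    have h2 := (Set.mem_univ_pi.mp hx') j
    simp only [Set.mem_Ico] at h1 h2
    have hmm' : (k j : ℕ) ≠ (k' j : ℕ) := fun hc => hj (Fin.val_injective hc)
    rcases hmm'.lt_or_gt with H | H
    · have hc : ((k j : ℕ) : ℝ) + 1 ≤ ((k' j : ℕ) : ℝ) := by exact_mod_cast H
      have hm : (((k j : ℕ) : ℝ) + 1) * h ≤ ((k' j : ℕ) : ℝ) * h :=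
        mul_le_mul_of_nonneg_right hc hh.le
      linarith [h1.2, h2.1]
    · have hc : ((k' j : ℕ) : ℝ) + 1 ≤ ((k j : ℕ) : ℝ) := by exact_mod_cast H
      have hm : (((k' j : ℕ) : ℝ) + 1) * h ≤ ((k j : ℕ) : ℝ) * h :=
        mul_le_mul_of_nonneg_right hc hh.le
      linarith [h1.1, h2.2]
  · intro x hx
    simp only [Set.mem_setOf_eq] at hx
    have hxb : ∀ j, -M ≤ x j ∧ x j ≤ M := fun j => abs_le.mp (hx j)
    have hnn : ∀ j, (0:ℝ) ≤ (x j - o j)/h := fun j =>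
      div_nonneg (by linarith [(hxb j).1, ho1 j]) hh.le
    have hflt : ∀ j, ⌊(x j - o j)/h⌋.toNat < N := by
      intro j
      rw [Int.toNat_lt' (Nat.pos_of_ne_zero hN0), Int.floor_lt]
      have h3 : (x j - o j)/h ≤ (M - o j)/h :=
        div_le_div_of_nonneg_right (by linarith [(hxb j).2]) hh.le
      have := hNj j
      push_cast
      linarith
    refine Set.mem_iUnion.mpr ⟨fun j => ⟨⌊(x j - o j)/h⌋.toNat, hflt j⟩, ?_⟩
    rw [Set.mem_univ_pi]
    intro j
    simp only [Set.mem_Ico]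
    have hcast : ((⌊(x j - o j)/h⌋.toNat : ℕ) : ℝ) = ((⌊(x j - o j)/h⌋ : ℤ) : ℝ) := by
      exact_mod_cast congrArg (fun z : ℤ => (z : ℝ))
        (Int.toNat_of_nonneg (Int.floor_nonneg.mpr (hnn j)))
    have h1 : ((⌊(x j - o j)/h⌋ : ℤ) : ℝ) ≤ (x j - o j)/h := Int.floor_le _
    have h2 : (x j - o j)/h < ((⌊(x j - o j)/h⌋ : ℤ) : ℝ) + 1 := Int.lt_floor_add_one _
    have h3 : (x j - o j)/h * h = x j - o j := div_mul_cancel₀ _ hh.ne'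
    constructor
    · have := mul_le_mul_of_nonneg_right h1 hh.le
      rw [hcast]
      linarith
    · have := mul_lt_mul_of_pos_right h2 hh
      rw [hcast]
      nlinarith
  · intro k x hx y hy j
    have h1 := (Set.mem_univ_pi.mp hx) j
    have h2 := (Set.mem_univ_pi.mp hy) j
    simp only [Set.mem_Ico] at h1 h2
    have he : (((k j : ℕ) : ℝ) + 1) * h = ((k j : ℕ) : ℝ) * h + h := by ring
    rw [abs_le]
    constructor <;> linarith [h1.1, h1.2, h2.1, h2.2]
  · intro k
    have hsub : frontier (A k) ⊆ ⋃ j : Fin d,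
        ({x : Fin d → ℝ | x j = o j + ((k j : ℕ) : ℝ) * h} ∪
         {x : Fin d → ℝ | x j = o j + (((k j : ℕ) : ℝ) + 1) * h}) := by
      intro x hx
      have hcl : x ∈ Set.univ.pi fun j =>
          Set.Icc (o j + ((k j : ℕ) : ℝ) * h) (o j + (((k j : ℕ) : ℝ) + 1) * h) := by
        have h1 : closure (A k) ⊆ Set.univ.pi fun j =>
            Set.Icc (o j + ((k j : ℕ) : ℝ) * h) (o j + (((k j : ℕ) : ℝ) + 1) * h) := by
          rw [hA_def, closure_pi_set]
          refine Set.pi_mono fun j _ => ?_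
          rw [closure_Ico (hlu j (k j : ℕ)).ne]
        exact h1 hx.1
      have hni : x ∉ Set.univ.pi fun j =>
          Set.Ioo (o j + ((k j : ℕ) : ℝ) * h) (o j + (((k j : ℕ) : ℝ) + 1) * h) := by
        intro hcon
        refine hx.2 ?_
        have h1 : (Set.univ.pi fun j =>
            Set.Ioo (o j + ((k j : ℕ) : ℝ) * h) (o j + (((k j : ℕ) : ℝ) + 1) * h))
            ⊆ interior (A k) := by
          rw [hA_def, interior_pi_set Set.finite_univ]
          refine Set.pi_mono fun j _ => ?_
          rw [interior_Ico]
        exact h1 hcon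
      rw [Set.mem_univ_pi] at hni
      push_neg at hni
      obtain ⟨j, hj⟩ := hni
      have hIcc := (Set.mem_univ_pi.mp hcl) j
      simp only [Set.mem_Icc] at hIcc
      simp only [Set.mem_Ioo] at hj
      refine Set.mem_iUnion.mpr ⟨j, ?_⟩
      rcases eq_or_ne (x j) (o j + ((k j : ℕ) : ℝ) * h) with he | hne1
      · exact Or.inl he
      · rcases eq_or_ne (x j) (o j + (((k j : ℕ) : ℝ) + 1) * h) with he | hne2
        · exact Or.inr he
        · exfalso
          exact hj ⟨lt_of_le_of_ne hIcc.1 (Ne.symm hne1), lt_of_le_of_ne hIcc.2 hne2⟩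
    refine measure_mono_null hsub (measure_iUnion_null fun j => measure_union_null ?_ ?_)
    · have := ho2 j ((k j : ℕ) : ℤ)
      simpa using this
    · have := ho2 j (((k j : ℕ) : ℤ) + 1)
      have he : {x : Fin d → ℝ | x j = o j + ((((k j : ℕ) : ℤ) + 1 : ℤ) : ℝ) * h}
          = {x : Fin d → ℝ | x j = o j + (((k j : ℕ) : ℝ) + 1) * h} := by
        ext x; push_cast; rfl
      rw [← he]
      simpa using this
end Grid


/-- `μ_n` converges weakly-* to `μ` if and only if
`d_TLp((μ_n, 𝟙), (μ, 𝟙)) → 0`, where `𝟙` is the constant function `1`. -/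
theorem weakstar_iff_tlp_of_const_one {d m : ℕ} (Ω : Set (Fin d → ℝ)) (hΩo : IsOpen Ω)
    (hΩb : Bornology.IsBounded Ω) (p : ℝ) (hp1 : 1 < p)
    (μseq : ℕ → Measure (Fin d → ℝ)) (μ : Measure (Fin d → ℝ))
    (hμseq : ∀ n, IsProbabilityMeasure (μseq n)) (hμ : IsProbabilityMeasure μ)
    (hμseqΩ : ∀ n, μseq n Ωᶜ = 0) (hμΩ : μ Ωᶜ = 0) :
    (∀ φ : BoundedContinuousFunction (Fin d → ℝ) ℝ,
        Tendsto (fun n => ∫ x, φ x ∂(μseq n)) atTop (𝓝 (∫ x, φ x ∂μ)))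
      ↔ Tendsto (fun n => dTLp p (μseq n) μ
          (fun _ => fun _ : Fin m => (1 : ℝ)) (fun _ => fun _ : Fin m => (1 : ℝ)))
          atTop (𝓝 0) := by
  classical
  have hp0 : (0:ℝ) < p := lt_trans one_pos hp1
  have hΩm : MeasurableSet Ω := hΩo.measurableSet
  have hc0 : ∀ x y : Fin d → ℝ, 0 ≤ lpPow p (x - y) := fun x y => lpPow_nonneg _
  set W : ℕ → ℝ := fun n => OTCost (fun x y : Fin d → ℝ => lpPow p (x - y)) (μseq n) μ
    with hW_def
  have hW0 : ∀ n, 0 ≤ W n := fun n => by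
    haveI := hμseq n
    exact OTCost_nonneg _ hc0 _ _
  -- rewrite dTLp in terms of W
  have hdTLp : (fun n => dTLp p (μseq n) μ (fun _ => fun _ : Fin m => (1:ℝ))
      (fun _ => fun _ : Fin m => (1:ℝ))) = fun n => (W n) ^ (1/p) := by
    funext n
    unfold dTLp
    congr 2
    funext x y
    show lpPow p (x - y) + lpPow p ((fun _ : Fin m => (1:ℝ)) - fun _ : Fin m => (1:ℝ))
      = lpPow p (x - y)
    rw [sub_self, lpPow_zero hp0.ne', add_zero]
  have hWiff : Tendsto (fun n => (W n) ^ (1/p)) atTop (𝓝 0)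
      ↔ Tendsto W atTop (𝓝 0) := by
    constructor
    · intro hT
      have hcont : ContinuousAt (fun y : ℝ => y ^ p) 0 :=
        Real.continuousAt_rpow_const 0 p (Or.inr hp0.le)
      have h2 := hcont.tendsto.comp hT
      rw [Real.zero_rpow hp0.ne'] at h2
      refine h2.congr fun n => ?_
      show ((W n) ^ (1/p)) ^ p = W n
      rw [← Real.rpow_mul (hW0 n), one_div, inv_mul_cancel₀ hp0.ne', Real.rpow_one]
    · intro hW
      have hcont : ContinuousAt (fun y : ℝ => y ^ (1/p)) 0 :=
        Real.continuousAt_rpow_const 0 (1/p) (Or.inr (by positivity))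
      have h2 := hcont.tendsto.comp hW
      rw [Real.zero_rpow (one_div_ne_zero hp0.ne')] at h2
      exact h2
  rw [hdTLp, hWiff]
  -- the uniform bound on the cost over Ω
  obtain ⟨M₀, hM₀⟩ := isBounded_iff_forall_norm_le.mp hΩb
  set M : ℝ := max M₀ 0 with hM_def
  have hM0 : 0 ≤ M := le_max_right _ _
  have hMx : ∀ x ∈ Ω, ∀ j, |x j| ≤ M := by
    intro x hx j
    calc |x j| = ‖x j‖ := (Real.norm_eq_abs _).symm
      _ ≤ ‖x‖ := norm_le_pi_norm x j
      _ ≤ M₀ := hM₀ x hx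
      _ ≤ M := le_max_left _ _
  set R : ℝ := d * (2*M) ^ p with hR_def
  have hR0 : 0 ≤ R := by positivity
  have hcR : ∀ x ∈ Ω, ∀ y ∈ Ω, lpPow p (x - y) ≤ R := by
    intro x hx y hy
    refine lpPow_le hp0 (by positivity) fun i => ?_
    have h1 := hMx x hx i
    have h2 := hMx y hy i
    calc |x i - y i| ≤ |x i| + |y i| := abs_sub _ _
      _ ≤ 2*M := by linarith
  constructor
  · -- weak convergence implies W → 0
    intro hweak
    set P : ℕ → ProbabilityMeasure (Fin d → ℝ) := fun n => ⟨μseq n, hμseq n⟩ with hP_def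
    set Q : ProbabilityMeasure (Fin d → ℝ) := ⟨μ, hμ⟩ with hQ_def
    have hPtend : Tendsto P atTop (𝓝 Q) :=
      ProbabilityMeasure.tendsto_iff_forall_integral_tendsto.mpr fun f => hweak f
    rw [Metric.tendsto_atTop]
    intro ε hε
    -- mesh size
    set t0 : ℝ := (ε/(2*((d:ℝ)+1))) ^ (1/p) with ht0_def
    have ht0pos : 0 < t0 := Real.rpow_pos_of_pos (by positivity) _
    set h : ℝ := min 1 t0 with hh_def
    have hh : 0 < h := lt_min one_pos ht0pos
    have hdh : (d:ℝ) * h ^ p < ε/2 := by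
      have h1 : h ^ p ≤ t0 ^ p := Real.rpow_le_rpow hh.le (min_le_right _ _) hp0.le
      have h2 : t0 ^ p = ε/(2*((d:ℝ)+1)) := by
        rw [ht0_def, ← Real.rpow_mul (by positivity), one_div,
          inv_mul_cancel₀ hp0.ne', Real.rpow_one]
      have hq : (0:ℝ) < ε/(2*((d:ℝ)+1)) := by positivity
      have he : ((d:ℝ)+1) * (ε/(2*((d:ℝ)+1))) = ε/2 := by
        field_simp
      have h4 : (d:ℝ) * h^p ≤ (d:ℝ) * (ε/(2*((d:ℝ)+1))) :=
        mul_le_mul_of_nonneg_left (h1.trans_eq h2) (Nat.cast_nonneg d)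
      nlinarith
    obtain ⟨N, A, hAm, hdisj, hcov, hdiam, hfront⟩ := exists_partition μ hh hM0
    have hcov' : Ω ⊆ ⋃ k, A k := fun x hx => hcov (fun j => hMx x hx j)
    have hsmall : ∀ k, ∀ x ∈ A k, ∀ y ∈ A k, lpPow p (x - y) ≤ (d:ℝ) * h ^ p :=
      fun k x hx y hy => lpPow_le hp0 hh.le fun i => hdiam k x hx y hy i
    have hconv : ∀ k, Tendsto (fun n => ((μseq n) (A k)).toReal) atTop
        (𝓝 ((μ (A k)).toReal)) := by
      intro k
      have h1 : Tendsto (fun n => (P n : Measure (Fin d → ℝ)) (A k)) atTop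
          (𝓝 ((Q : Measure (Fin d → ℝ)) (A k))) :=
        ProbabilityMeasure.tendsto_measure_of_null_frontier_of_tendsto' hPtend (hfront k)
      exact (ENNReal.tendsto_toReal (measure_ne_top _ _)).comp h1
    set T : ℕ → ℝ := fun n => ∑ k, |((μseq n) (A k)).toReal - (μ (A k)).toReal| with hT_def
    have hTtend : Tendsto T atTop (𝓝 0) := by
      have h1 : ∀ k : (Fin d → Fin N), Tendsto
          (fun n => |((μseq n) (A k)).toReal - (μ (A k)).toReal|) atTop (𝓝 0) := by
        intro k
        have h2 : Tendsto (fun n => ((μseq n) (A k)).toReal - (μ (A k)).toReal) atTop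
            (𝓝 (((μ (A k)).toReal) - (μ (A k)).toReal)) :=
          (hconv k).sub tendsto_const_nhds
        have h2' := h2.abs
        simpa using h2'
      have h3 : Tendsto (fun n => ∑ k : Fin d → Fin N,
          |((μseq n) (A k)).toReal - (μ (A k)).toReal|) atTop
          (𝓝 (∑ _k : Fin d → Fin N, (0:ℝ))) :=
        tendsto_finset_sum _ (fun k _ => h1 k)
      simpa using h3
    have hRT : Tendsto (fun n => R * T n) atTop (𝓝 0) := by
      simpa using hTtend.const_mul R
    have hev : ∀ᶠ n in atTop, R * T n < ε/2 :=
      hRT.eventually_lt_const (by linarith : (0:ℝ) < ε/2)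
    obtain ⟨N₀, hN₀⟩ := eventually_atTop.mp hev
    refine ⟨N₀, fun n hn => ?_⟩
    haveI := hμseq n
    have hWle : W n ≤ (d:ℝ)*h^p + R * T n :=
      OTCost_le_of_partition (fun x y : Fin d → ℝ => lpPow p (x - y)) hc0
        ((lpPow_continuous hp0).measurable) hΩm (hμseqΩ n) hμΩ hR0 hcR hAm hdisj hcov'
        (by positivity) hsmall
    rw [Real.dist_eq, sub_zero, abs_of_nonneg (hW0 n)]
    have h5 := hN₀ n hn
    calc W n ≤ (d:ℝ)*h^p + R * T n := hWle
      _ < ε/2 + ε/2 := by linarith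
      _ = ε := by ring
  · -- W → 0 implies weak convergence
    intro hW φ
    rw [Metric.tendsto_atTop]
    intro ε hε
    have hK : IsCompact (closure Ω) :=
      Metric.isCompact_of_isClosed_isBounded isClosed_closure hΩb.closure
    obtain ⟨δ, hδ0, hδ⟩ := Metric.uniformContinuousOn_iff.mp
      (hK.uniformContinuousOn_of_continuous φ.continuous.continuousOn) (ε/2) (by linarith)
    have hδp : (0:ℝ) < δ ^ p := Real.rpow_pos_of_pos hδ0 _
    have hφ1 : (0:ℝ) < 2*‖φ‖+1 := by positivity
    set η : ℝ := (ε/2) * δ^p / (2*‖φ‖ + 1) with hη_def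
    have hη0 : 0 < η := by
      apply div_pos (mul_pos (by linarith) hδp) hφ1
    obtain ⟨N₀, hN₀⟩ := Metric.tendsto_atTop.mp hW η hη0
    refine ⟨N₀, fun n hn => ?_⟩
    haveI := hμseq n
    have hWn : W n < η := by
      have h1 := hN₀ n hn
      rwa [Real.dist_eq, sub_zero, abs_of_nonneg (hW0 n)] at h1
    obtain ⟨π, hπ, hπc⟩ := exists_coupling_lt _ hWn
    have hUC : ∀ x ∈ Ω, ∀ y ∈ Ω, dist x y < δ → |φ x - φ y| ≤ ε/2 := by
      intro x hx y hy hxy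
      have h1 := hδ x (subset_closure hx) y (subset_closure hy) hxy
      rw [Real.dist_eq] at h1
      exact h1.le
    have hkey := abs_integral_sub_le_of_coupling hp0 hΩm (hμseqΩ n) hμΩ φ hδ0
      (by linarith : (0:ℝ) ≤ ε/2) hcR hUC hπ
    rw [Real.dist_eq]
    have hcoef : (0:ℝ) ≤ 2*‖φ‖/δ^p := by positivity
    have h2 : (2*‖φ‖/δ^p) * ∫ z, lpPow p (z.1 - z.2) ∂π ≤ (2*‖φ‖/δ^p) * η :=
      mul_le_mul_of_nonneg_left hπc.le hcoef
    have h3 : (2*‖φ‖/δ^p) * η < ε/2 := by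
      have he : (2*‖φ‖/δ^p) * ((ε/2) * δ^p / (2*‖φ‖+1)) = (ε/2) * ((2*‖φ‖)/(2*‖φ‖+1)) := by
        field_simp
      rw [hη_def, he]
      have h4 : (2*‖φ‖)/(2*‖φ‖+1) < 1 := by
        rw [div_lt_one hφ1]
        linarith
      nlinarith
    calc |∫ x, φ x ∂(μseq n) - ∫ x, φ x ∂μ|
        ≤ ε/2 + (2*‖φ‖/δ^p) * ∫ z, lpPow p (z.1 - z.2) ∂π := hkey
      _ < ε := by linarith
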